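/- arXiv:2508.12581 — 2 statements merged into one kernel-verified Lean document; each statement's English description precedes it below -/
import Mathlib

section
/- Let k be a field and k[x,y] a graded polynomial ring with deg x = m > 0 and deg y = n > 0, m and n coprime, m ≤ n. Let f be a monic homogeneous element of positive degree and R = k[x,y]/(f), with a-invariant a = deg f - m - n. Then a < 0 if and only if either R is regular, or f = x^{n_x} with n_x > 1 and (n_x - 1)m < n. -/
open MvPolynomial

lemma weight_fin2 (m n : ℕ) (μ : Fin 2 →₀ ℕ) :
    Finsupp.weight ![m, n] μ = μ 0 * m + μ 1 * n := by
  rw [Finsupp.weight_apply, Finsupp.sum_fintype _ _ (by simp), Fin.sum_univ_two]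
  simp [smul_eq_mul]

lemma sq_span_eq {k : Type} [Field k] :
    (Ideal.span {(X 0 : MvPolynomial (Fin 2) k), X 1}) ^ 2 =
      Ideal.span ((fun s => monomial s (1 : k)) ''
        {Finsupp.single 0 2, Finsupp.single 0 1 + Finsupp.single 1 1, Finsupp.single 1 2}) := by
  have hxx : (X 0 : MvPolynomial (Fin 2) k) * X 0 = monomial (Finsupp.single 0 2) 1 := by
    rw [← sq, X_pow_eq_monomial]
  have hxy : (X 0 : MvPolynomial (Fin 2) k) * X 1 =
      monomial (Finsupp.single 0 1 + Finsupp.single 1 1) 1 := by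
    rw [X, X, monomial_mul, one_mul]
  have hyy : (X 1 : MvPolynomial (Fin 2) k) * X 1 = monomial (Finsupp.single 1 2) 1 := by
    rw [← sq, X_pow_eq_monomial]
  apply le_antisymm
  · rw [pow_two, Ideal.mul_le]
    intro r hr s hs
    obtain ⟨u, v, rfl⟩ := Ideal.mem_span_pair.mp hr
    obtain ⟨u', v', rfl⟩ := Ideal.mem_span_pair.mp hs
    have e : (u * X 0 + v * X 1) * (u' * X 0 + v' * X 1) =
        (u * u') * (X 0 * X 0) + (u * v' + v * u') * (X 0 * X 1) + (v * v') * (X 1 * X 1) := by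
      ring
    rw [e, hxx, hxy, hyy]
    refine Ideal.add_mem _ (Ideal.add_mem _ ?_ ?_) ?_ <;>
      exact Ideal.mul_mem_left _ _ (Ideal.subset_span (by simp))
  · rw [Ideal.span_le]
    rintro p ⟨s, hs, rfl⟩
    rw [pow_two]
    have h0 : (X 0 : MvPolynomial (Fin 2) k) ∈ Ideal.span {(X 0 : MvPolynomial (Fin 2) k), X 1} :=
      Ideal.subset_span (by simp)
    have h1 : (X 1 : MvPolynomial (Fin 2) k) ∈ Ideal.span {(X 0 : MvPolynomial (Fin 2) k), X 1} :=
      Ideal.subset_span (by simp)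
    rcases hs with rfl | rfl | rfl
    · simpa only [← hxx, SetLike.mem_coe] using Ideal.mul_mem_mul h0 h0
    · simpa only [← hxy, SetLike.mem_coe] using Ideal.mul_mem_mul h0 h1
    · simpa only [← hyy, SetLike.mem_coe] using Ideal.mul_mem_mul h1 h1

lemma mem_sq_iff {k : Type} [Field k] (g : MvPolynomial (Fin 2) k) :
    g ∈ (Ideal.span {(X 0 : MvPolynomial (Fin 2) k), X 1}) ^ 2 ↔
      ∀ μ ∈ g.support, 2 ≤ μ 0 + μ 1 := by
  rw [sq_span_eq, mem_ideal_span_monomial_image]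
  refine forall₂_congr fun μ _ => ⟨?_, ?_⟩
  · rintro ⟨s, hs, hle⟩
    rcases hs with rfl | rfl | rfl
    · have := Finsupp.single_le_iff.mp hle; omega
    · have h0 := hle 0
      have h1 := hle 1
      simp at h0 h1
      omega
    · have := Finsupp.single_le_iff.mp hle; omega
  · intro h2
    rcases Nat.lt_or_ge (μ 0) 1 with h | h
    · exact ⟨Finsupp.single 1 2, by simp, Finsupp.single_le_iff.mpr (by omega)⟩
    · rcases Nat.lt_or_ge (μ 0) 2 with h' | h'
      · refine ⟨Finsupp.single 0 1 + Finsupp.single 1 1, by simp, ?_⟩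
        intro i
        fin_cases i <;> simp <;> omega
      · exact ⟨Finsupp.single 0 2, by simp, Finsupp.single_le_iff.mpr h'⟩

/-- For `R = k[x,y]/(f)` with `deg x = m`, `deg y = n` positive coprime,
`m ≤ n`, and `f` monic homogeneous of positive degree `d`, the `a`-invariant
`a = d - m - n` is negative if and only if either `R` is regular (equivalently,
`f ∉ (x,y)²`) or `f = x^{n_x}` with `n_x > 1` and `(n_x - 1)·m < n`. -/
theorem a_invariant_negative_iff
    {k : Type} [Field k] (m n : ℕ) (hm : 0 < m) (hn : 0 < n) (hmn : m ≤ n)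
    (hcop : Nat.Coprime m n)
    (f : MvPolynomial (Fin 2) k) (d : ℕ) (hd : 0 < d) (hf0 : f ≠ 0)
    (hhom : f.IsWeightedHomogeneous ![m, n] d)
    (hmonic : ∀ (nx : ℕ) (c : k), f = c • (X 0 : MvPolynomial (Fin 2) k) ^ nx →
      f = (X 0 : MvPolynomial (Fin 2) k) ^ nx) :
    ((d : ℤ) - m - n < 0) ↔
      (f ∉ (Ideal.span {(X 0 : MvPolynomial (Fin 2) k), X 1}) ^ 2 ∨
        ∃ nx : ℕ, 1 < nx ∧ f = (X 0 : MvPolynomial (Fin 2) k) ^ nx ∧ (nx - 1) * m < n) := by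
  have hiff : ((d : ℤ) - m - n < 0) ↔ d < m + n := by omega
  rw [hiff]
  have hwt : ∀ μ ∈ f.support, μ 0 * m + μ 1 * n = d := by
    intro μ hμ
    rw [← weight_fin2 m n μ]
    exact hhom (mem_support_iff.mp hμ)
  constructor
  · intro hdmn
    by_cases hf : f ∈ (Ideal.span {(X 0 : MvPolynomial (Fin 2) k), X 1}) ^ 2
    · right
      have h2 := (mem_sq_iff f).mp hf
      -- every μ in support has μ 1 = 0 and μ 0 ≥ 2
      have key : ∀ μ ∈ f.support, μ 1 = 0 ∧ 2 ≤ μ 0 := by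
        intro μ hμ
        have hw := hwt μ hμ
        have h2μ := h2 μ hμ
        rcases Nat.lt_or_ge (μ 1) 1 with h | h
        · omega
        · exfalso
          rcases Nat.lt_or_ge (μ 1) 2 with h' | h'
          · have hμ1 : μ 1 = 1 := by omega
            have hμ0 : 1 ≤ μ 0 := by omega
            nlinarith
          · nlinarith
      obtain ⟨μ, hμ⟩ := (support_nonempty.mpr hf0)
      obtain ⟨hμ1, hμ0⟩ := key μ hμ
      set a := μ 0 with ha
      have ham : a * m = d := by
        have h := hwt μ hμ
        rw [hμ1, zero_mul, add_zero] at h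
        exact h
      have hsupp : ∀ ν ∈ f.support, ν = Finsupp.single 0 a := by
        intro ν hν
        obtain ⟨hν1, hν0⟩ := key ν hν
        have hw := hwt ν hν
        have hν0a : ν 0 = a := by
          rw [hν1, zero_mul, add_zero, ← ham] at hw
          exact Nat.eq_of_mul_eq_mul_right hm hw
        ext i
        fin_cases i <;> simp [hν0a, hν1]
      have hc : f = (f.coeff (Finsupp.single 0 a)) • (X 0 : MvPolynomial (Fin 2) k) ^ a := by
        apply MvPolynomial.ext
        intro ν
        rw [coeff_smul, X_pow_eq_monomial, coeff_monomial]
        split_ifs with hcase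
        · rw [← hcase, smul_eq_mul, mul_one]
        · rw [smul_zero]
          by_contra hne
          exact hcase ((hsupp ν (mem_support_iff.mpr hne)).symm)
      have hfx : f = (X 0 : MvPolynomial (Fin 2) k) ^ a := hmonic a _ hc
      refine ⟨a, by omega, hfx, ?_⟩
      rw [Nat.sub_mul, one_mul]
      omega
    · exact Or.inl hf
  · rintro (hf | ⟨nx, hnx1, hfx, hnxm⟩)
    · rw [mem_sq_iff] at hf
      push_neg at hf
      obtain ⟨μ, hμ, hlt⟩ := hf
      have hw := hwt μ hμ
      rcases Nat.lt_or_ge (μ 0) 1 with h0 | h0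
      · rcases Nat.lt_or_ge (μ 1) 1 with h1 | h1
        · exfalso; have : μ 0 = 0 ∧ μ 1 = 0 := by omega
          simp [this.1, this.2] at hw; omega
        · have : μ 0 = 0 ∧ μ 1 = 1 := by omega
          rw [this.1, this.2] at hw; simp at hw; omega
      · have : μ 0 = 1 ∧ μ 1 = 0 := by omega
        rw [this.1, this.2] at hw; simp at hw; omega
    · have hco : f.coeff (Finsupp.single 0 nx) ≠ 0 := by
        rw [hfx, X_pow_eq_monomial, coeff_monomial, if_pos rfl]
        exact one_ne_zero
      have hw := hhom hco
      rw [weight_fin2] at hw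
      have hw2 : nx * m = d := by simpa using hw
      have hnx : nx = (nx - 1) + 1 := by omega
      rw [hnx, add_mul, one_mul] at hw2
      omega
end

section
/- Let R = k[x,y]/(f) with x, y of positive coprime degrees m ≤ n and f monic homogeneous with deg f ≥ m + n, and set a = deg f - m - n. For all integers 1 ≤ i, i' ≤ a, the space of degree-0 graded R-module homomorphisms from R(i)_{≥0} to R(i')_{≥0} is isomorphic as a k-vector space to R_{i'-i}, the degree (i'-i) homogeneous component of R. -/
open MvPolynomial

set_option synthInstance.maxHeartbeats 1000000
set_option maxHeartbeats 1600000

section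

variable {k : Type} [Field k] (m n : ℕ) (f : MvPolynomial (Fin 2) k)

/-- The hypersurface ring `R = k[x,y]/(f)`. -/
abbrev HypersurfaceRing := MvPolynomial (Fin 2) k ⧸ Ideal.span {f}

/-- The degree-`dd` homogeneous component of `R = k[x,y]/(f)` for the grading
`deg x = m`, `deg y = n` (trivial in negative degrees). -/
noncomputable def hyperComp (dd : ℤ) : Submodule k (HypersurfaceRing f) :=
  (weightedHomogeneousSubmodule k ![(m : ℤ), (n : ℤ)] dd).map
    (Ideal.Quotient.mkₐ k (Ideal.span {f})).toLinearMap

/-- The truncated shifted module `R(i)_{≥0}`, realized as the `R`-submodule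
`R_{≥ i} ⊆ R`. -/
noncomputable def hyperTrunc (i : ℤ) : Submodule (HypersurfaceRing f) (HypersurfaceRing f) :=
  Submodule.span (HypersurfaceRing f)
    {r : HypersurfaceRing f | ∃ e : ℤ, i ≤ e ∧ r ∈ hyperComp m n f e}

/-- The space of degree-`0` graded `R`-module homomorphisms
`R(i)_{≥0} → R(i')_{≥0}`, i.e. `R`-linear maps `R_{≥i} → R_{≥i'}` shifting
degrees by `i' - i`. -/
noncomputable def hyperHom0 (i i' : ℤ) :
    Submodule k ((hyperTrunc m n f i) →ₗ[HypersurfaceRing f] (hyperTrunc m n f i')) where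
  carrier := {φ | ∀ (e : ℤ) (v : hyperTrunc m n f i),
    (v : HypersurfaceRing f) ∈ hyperComp m n f e →
      ((φ v : HypersurfaceRing f) ∈ hyperComp m n f (e + (i' - i)))}
  add_mem' := by
    intro φ ψ hφ hψ e v hv
    simpa using Submodule.add_mem _ (hφ e v hv) (hψ e v hv)
  zero_mem' := by
    intro e v hv
    simpa using Submodule.zero_mem _
  smul_mem' := by
    intro c φ hφ e v hv
    simpa using Submodule.smul_mem _ c (hφ e v hv)

end

section Helpers

variable {k : Type} [Field k] (m n : ℕ)

local notation "S" => MvPolynomial (Fin 2) k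

lemma weight_two (s : Fin 2 →₀ ℕ) :
    (Finsupp.weight ![(m : ℤ), (n : ℤ)] s) = (s 0 : ℤ) * m + (s 1 : ℤ) * n := by
  rw [Finsupp.weight_apply, Finsupp.sum_fintype]
  · simp [Fin.sum_univ_two, mul_comm]
  · intro i; simp

/-- embed `k[x,y]` into `k[x,y][t]` sending a weighted-homogeneous polynomial of
degree `d` to `C g * t^d`. -/
noncomputable def toSingle : MvPolynomial (Fin 2) k →ₐ[k] Polynomial (MvPolynomial (Fin 2) k) :=
  aeval (fun j : Fin 2 => Polynomial.C (X j) * Polynomial.X ^ (![m, n] j))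

lemma toSingle_monomial (s : Fin 2 →₀ ℕ) (c : k) :
    toSingle m n (monomial s c) =
      Polynomial.C (monomial s c) * Polynomial.X ^ (s 0 * m + s 1 * n) := by
  rw [toSingle, aeval_monomial, Finsupp.prod_fintype _ _ (fun i => pow_zero _),
    Fin.prod_univ_two]
  have hm : (monomial s c : S) = C c * X 0 ^ (s 0) * X 1 ^ (s 1) := by
    rw [monomial_eq, Finsupp.prod_fintype _ _ (fun i => pow_zero _), Fin.prod_univ_two]
    ring
  have halg : algebraMap k (Polynomial S) c = Polynomial.C (C c) := by
    rw [Polynomial.algebraMap_apply]; rfl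
  rw [hm, halg]
  rw [mul_pow, mul_pow, ← Polynomial.C_pow, ← Polynomial.C_pow, ← pow_mul, ← pow_mul,
    map_mul, map_mul]
  norm_num [Matrix.cons_val_zero, Matrix.cons_val_one, Matrix.head_cons]
  ring

variable {m n}

lemma toSingle_homog {g : S} {d : ℕ}
    (hg : g.IsWeightedHomogeneous ![(m : ℤ), (n : ℤ)] (d : ℤ)) :
    toSingle m n g = Polynomial.C g * Polynomial.X ^ d := by
  conv_lhs => rw [g.as_sum]
  rw [map_sum]
  have : ∀ s ∈ g.support, toSingle m n (monomial s (coeff s g))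
      = Polynomial.C (monomial s (coeff s g)) * Polynomial.X ^ d := by
    intro s hs
    rw [toSingle_monomial]
    congr 2
    have hw := hg (MvPolynomial.mem_support_iff.mp hs)
    rw [weight_two] at hw
    have : ((s 0 * m + s 1 * n : ℕ) : ℤ) = (d : ℤ) := by push_cast at hw ⊢; linarith
    exact_mod_cast this
  rw [Finset.sum_congr rfl this, ← Finset.sum_mul, ← map_sum, ← g.as_sum]

/-- a weighted-homogeneous multiple of `f` of degree `< dF` is zero. -/
lemma eq_zero_of_dvd_of_lt {f g : S} {dF : ℕ} {d : ℤ}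
    (hf : f.IsWeightedHomogeneous ![(m : ℤ), (n : ℤ)] (dF : ℤ))
    (hg : g.IsWeightedHomogeneous ![(m : ℤ), (n : ℤ)] d)
    (hd : d < (dF : ℤ)) (hdvd : f ∣ g) : g = 0 := by
  rcases lt_or_ge d 0 with hneg | hpos
  · by_contra hne
    obtain ⟨s, hs⟩ := MvPolynomial.ne_zero_iff.mp hne
    have := hg hs
    rw [weight_two] at this
    nlinarith [Int.natCast_nonneg (s 0), Int.natCast_nonneg (s 1),
      Int.natCast_nonneg m, Int.natCast_nonneg n]
  obtain ⟨D, rfl⟩ : ∃ D : ℕ, d = (D : ℤ) := ⟨d.toNat, (Int.toNat_of_nonneg hpos).symm⟩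
  obtain ⟨h, rfl⟩ := hdvd
  have hDd : D < dF := by exact_mod_cast hd
  have := toSingle_homog (m := m) (n := n) hg
  rw [map_mul, toSingle_homog hf] at this
  rw [show Polynomial.C f * Polynomial.X ^ dF * toSingle m n h
      = (Polynomial.C f * toSingle m n h) * Polynomial.X ^ dF from by ring] at this
  have hco := congrArg (fun p => Polynomial.coeff p D) this
  simp only [Polynomial.coeff_mul_X_pow', hDd.not_ge, if_false, le_refl, if_true,
    Nat.sub_self, Polynomial.coeff_C_zero] at hco
  first
  | exact hco
  | exact hco.symm

end Helpers

section HelpersB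

variable {k : Type} [Field k]

local notation "S" => MvPolynomial (Fin 2) k

lemma prime_X0 : Prime (X 0 : S) := by
  rw [← MulEquiv.prime_iff (MvPolynomial.finSuccEquiv k 1).toMulEquiv]
  have : (MvPolynomial.finSuccEquiv k 1).toMulEquiv (X 0) = Polynomial.X := by
    simpa using MvPolynomial.finSuccEquiv_X_zero (R := k) (n := 1)
  rw [this]
  exact Polynomial.prime_X

lemma prime_X1 : Prime (X 1 : S) := by
  rw [← MulEquiv.prime_iff (MvPolynomial.renameEquiv k (Equiv.swap (0 : Fin 2) 1)).toMulEquiv]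
  have : (MvPolynomial.renameEquiv k (Equiv.swap (0 : Fin 2) 1)).toMulEquiv (X 1)
      = (X 0 : S) := by
    simp [MvPolynomial.renameEquiv_apply, MvPolynomial.rename_X]
  rw [this]
  exact prime_X0

lemma X0_not_dvd_X1 : ¬ (X 0 : S) ∣ (X 1 : S) := by
  intro h
  obtain ⟨c, hc⟩ := h
  have := congrArg (MvPolynomial.eval (fun j : Fin 2 => if j = 0 then (0 : k) else 1)) hc
  simp at this

lemma X1_not_dvd_X0 : ¬ (X 1 : S) ∣ (X 0 : S) := by
  intro h
  obtain ⟨c, hc⟩ := h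
  have := congrArg (MvPolynomial.eval (fun j : Fin 2 => if j = 0 then (1 : k) else 0)) hc
  simp at this

lemma X0_not_dvd_X1_pow (Q : ℕ) : ¬ (X 0 : S) ∣ (X 1 : S) ^ Q :=
  fun h => X0_not_dvd_X1 (prime_X0.dvd_of_dvd_pow h)

lemma X1_not_dvd_X0_pow (P : ℕ) : ¬ (X 1 : S) ∣ (X 0 : S) ^ P :=
  fun h => X1_not_dvd_X0 (prime_X1.dvd_of_dvd_pow h)

/-- if `f` divides `c·x^P` and `c·y^Q` then `f` divides `c`. -/
lemma dvd_of_dvd_mul_pows (f : S) {P Q : ℕ} :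
    ∀ c : S, f ∣ c * X 0 ^ P → f ∣ c * X 1 ^ Q → f ∣ c := by
  refine UniqueFactorizationMonoid.induction_on_prime
    (P := fun a : S => ∀ c : S, a ∣ c * X 0 ^ P → a ∣ c * X 1 ^ Q → a ∣ c) f ?_ ?_ ?_
  · intro c h0 _
    rw [zero_dvd_iff] at h0 ⊢
    rcases mul_eq_zero.mp h0 with h | h
    · exact h
    · exact absurd h (pow_ne_zero _ (MvPolynomial.X_ne_zero _))
  · intro u hu c _ _
    exact hu.dvd
  · intro a p ha hp ih c h0 h1
    have hpc : p ∣ c := by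
      rcases hp.dvd_or_dvd (dvd_trans (dvd_mul_right p a) h0) with h | h
      · exact h
      · -- p ∣ X 0 ^ P
        have hx0 : p ∣ (X 0 : S) := hp.dvd_of_dvd_pow h
        rcases hp.dvd_or_dvd (dvd_trans (dvd_mul_right p a) h1) with h' | h'
        · exact h'
        · have hx1 : p ∣ (X 1 : S) := hp.dvd_of_dvd_pow h'
          have : (X 0 : S) ∣ X 1 := (hp.associated_of_dvd prime_X0 hx0).symm.dvd.trans hx1
          exact absurd this X0_not_dvd_X1
    obtain ⟨c', rfl⟩ := hpc
    have hcancel0 : a ∣ c' * X 0 ^ P := by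
      rw [mul_assoc] at h0
      exact (mul_dvd_mul_iff_left hp.ne_zero).mp h0
    have hcancel1 : a ∣ c' * X 1 ^ Q := by
      rw [mul_assoc] at h1
      exact (mul_dvd_mul_iff_left hp.ne_zero).mp h1
    exact mul_dvd_mul_left p (ih c' hcancel0 hcancel1)

lemma X0_pow_dvd_cancel {P Q : ℕ} {c : S} (h : (X 0 : S) ^ P ∣ X 1 ^ Q * c) :
    (X 0 : S) ^ P ∣ c :=
  prime_X0.pow_dvd_of_dvd_mul_left P (X0_not_dvd_X1_pow Q) h

variable {m n : ℕ}

/-- dividing a weighted-homogeneous polynomial by `x^P` yields a homogeneous one. -/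
lemma homog_of_X0_pow_mul {r : S} {P : ℕ} {e : ℤ}
    (h : (X 0 ^ P * r : S).IsWeightedHomogeneous ![(m : ℤ), (n : ℤ)] e) :
    r.IsWeightedHomogeneous ![(m : ℤ), (n : ℤ)] (e - P * m) := by
  intro s hs
  have hco : coeff (Finsupp.single 0 P + s) (X 0 ^ P * r : S) = coeff s r := by
    rw [X_pow_eq_monomial, coeff_monomial_mul, one_mul]
  have := h (d := Finsupp.single 0 P + s) (by rw [hco]; exact hs)
  rw [map_add] at this
  have hsingle : (Finsupp.weight ![(m : ℤ), (n : ℤ)] (Finsupp.single (0 : Fin 2) P)) = P * m := by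
    rw [weight_two]
    simp
  rw [hsingle] at this
  omega

end HelpersB

section Helpers2

variable {k : Type} [Field k] (m n : ℕ) (f : MvPolynomial (Fin 2) k)

local notation "S" => MvPolynomial (Fin 2) k

lemma mem_hyperComp_iff {r : HypersurfaceRing f} {d : ℤ} :
    r ∈ hyperComp m n f d ↔ ∃ g : S,
      g.IsWeightedHomogeneous ![(m : ℤ), (n : ℤ)] d ∧ Ideal.Quotient.mk (Ideal.span {f}) g = r := by
  simp only [hyperComp, Submodule.mem_map, mem_weightedHomogeneousSubmodule,
    AlgHom.toLinearMap_apply, Ideal.Quotient.mkₐ_eq_mk]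

lemma hyperComp_mul_mem {r r' : HypersurfaceRing f} {d d' : ℤ}
    (h : r ∈ hyperComp m n f d) (h' : r' ∈ hyperComp m n f d') :
    r * r' ∈ hyperComp m n f (d + d') := by
  rw [mem_hyperComp_iff] at h h' ⊢
  obtain ⟨g, hg, rfl⟩ := h
  obtain ⟨g', hg', rfl⟩ := h'
  exact ⟨g * g', hg.mul hg', map_mul _ _ _⟩

lemma monomial_mem_hyperComp (p q : ℕ) :
    (Ideal.Quotient.mk (Ideal.span {f}) (X 0 ^ p * X 1 ^ q) : HypersurfaceRing f)
      ∈ hyperComp m n f ((p * m + q * n : ℕ) : ℤ) := by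
  rw [mem_hyperComp_iff]
  refine ⟨X 0 ^ p * X 1 ^ q, ?_, rfl⟩
  rw [X_pow_eq_monomial, X_pow_eq_monomial, monomial_mul, mul_one]
  apply isWeightedHomogeneous_monomial
  rw [map_add, weight_two, weight_two]
  simp only [Finsupp.single_eq_same, Finsupp.single_eq_of_ne (by decide : (0 : Fin 2) ≠ 1),
    Finsupp.single_eq_of_ne (by decide : (1 : Fin 2) ≠ 0)]
  push_cast
  ring

lemma homog_X0_pow (c : ℕ) :
    ((X 0 : MvPolynomial (Fin 2) k) ^ c).IsWeightedHomogeneous ![(m : ℤ), (n : ℤ)]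
      ((c * m : ℕ) : ℤ) := by
  rw [X_pow_eq_monomial]
  apply isWeightedHomogeneous_monomial
  rw [weight_two]
  simp only [Finsupp.single_eq_same, Finsupp.single_eq_of_ne (by decide : (1 : Fin 2) ≠ 0)]
  push_cast
  ring

lemma homog_X1_pow (c : ℕ) :
    ((X 1 : MvPolynomial (Fin 2) k) ^ c).IsWeightedHomogeneous ![(m : ℤ), (n : ℤ)]
      ((c * n : ℕ) : ℤ) := by
  rw [X_pow_eq_monomial]
  apply isWeightedHomogeneous_monomial
  rw [weight_two]
  simp only [Finsupp.single_eq_same, Finsupp.single_eq_of_ne (by decide : (0 : Fin 2) ≠ 1)]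
  push_cast
  ring

lemma smul_mem_hyperTrunc {i i' : ℤ} {r v : HypersurfaceRing f}
    (hr : r ∈ hyperComp m n f (i' - i)) (hv : v ∈ hyperTrunc m n f i) :
    r * v ∈ hyperTrunc m n f i' := by
  refine Submodule.span_induction ?_ ?_ ?_ ?_ hv
  · intro w hw
    obtain ⟨e, hie, hwe⟩ := hw
    refine Submodule.subset_span ⟨i' - i + e, by omega, ?_⟩
    exact hyperComp_mul_mem m n f hr hwe
  · simp
  · intro a b _ _ ha hb
    rw [mul_add]
    exact Submodule.add_mem _ ha hb
  · intro c a _ ha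
    rw [smul_eq_mul, mul_left_comm]
    exact Submodule.smul_mem _ _ ha

end Helpers2


section MulHom

variable {k : Type} [Field k] (m n : ℕ) (f : MvPolynomial (Fin 2) k) (i i' : ℤ)

/-- multiplication by a degree-`i' - i` element as a map of truncations. -/
noncomputable def mulTrunc (r : hyperComp m n f (i' - i)) :
    hyperTrunc m n f i →ₗ[HypersurfaceRing f] hyperTrunc m n f i' where
  toFun v := ⟨(r : HypersurfaceRing f) * (v : HypersurfaceRing f),
    smul_mem_hyperTrunc m n f r.2 v.2⟩
  map_add' v w := Subtype.ext (by
    push_cast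
    ring)
  map_smul' c v := Subtype.ext (by
    push_cast
    simp only [smul_eq_mul, RingHom.id_apply, id_eq]
    ring)

@[simp] lemma mulTrunc_apply_coe (r : hyperComp m n f (i' - i)) (v : hyperTrunc m n f i) :
    ((mulTrunc m n f i i' r v : hyperTrunc m n f i') : HypersurfaceRing f)
      = (r : HypersurfaceRing f) * (v : HypersurfaceRing f) := rfl

/-- multiplication as a `k`-linear map into the degree-`0` Hom module. -/
noncomputable def mulHom : hyperComp m n f (i' - i) →ₗ[k] hyperHom0 m n f i i' where
  toFun r := ⟨mulTrunc m n f i i' r, by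
    intro e v hv
    rw [mulTrunc_apply_coe]
    have := hyperComp_mul_mem m n f r.2 hv
    rwa [add_comm] at this⟩
  map_add' r s := Subtype.ext (LinearMap.ext fun v => Subtype.ext (by
    simp only [mulTrunc_apply_coe, LinearMap.add_apply, Submodule.coe_add]
    ring))
  map_smul' c r := Subtype.ext (LinearMap.ext fun v => Subtype.ext (by
    simp only [mulTrunc_apply_coe, LinearMap.smul_apply, SetLike.val_smul, RingHom.id_apply,
      SetLike.val_smul_of_tower, smul_mul_assoc]))

@[simp] lemma mulHom_apply_coe (r : hyperComp m n f (i' - i)) (v : hyperTrunc m n f i) :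
    ((((mulHom m n f i i' r) : hyperTrunc m n f i →ₗ[HypersurfaceRing f] hyperTrunc m n f i') v
      : hyperTrunc m n f i') : HypersurfaceRing f)
      = (r : HypersurfaceRing f) * (v : HypersurfaceRing f) := rfl

end MulHom


section NatArith

/-- `t ≤ ⌈t/n⌉ * n`. -/
lemma ceil_le_mul (n t : ℕ) (hn : 0 < n) : t ≤ (t + n - 1) / n * n := by
  rcases Nat.eq_zero_or_pos t with rfl | ht
  · exact Nat.zero_le _
  apply Nat.le_of_pred_lt
  rw [Nat.pred_eq_sub_one, ← Nat.div_lt_iff_lt_mul hn]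
  have h : t + n - 1 = (t - 1) + n := by omega
  rw [h, Nat.add_div_right _ hn]
  exact Nat.lt_succ_of_le (Nat.div_le_div_right (by omega))

lemma mul_le_ceil (n t : ℕ) : (t + n - 1) / n * n ≤ t + n - 1 :=
  Nat.div_mul_le_self _ _

lemma le_succ_div_mul (m I : ℕ) (hm : 0 < m) : I ≤ ((I - 1) / m + 1) * m := by
  apply Nat.le_of_pred_lt
  rw [Nat.pred_eq_sub_one, ← Nat.div_lt_iff_lt_mul hm]
  exact Nat.lt_succ_of_le le_rfl

lemma succ_div_mul_le (m I : ℕ) : ((I - 1) / m + 1) * m ≤ I - 1 + m := by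
  rw [add_mul, one_mul]
  exact Nat.add_le_add_right (Nat.div_mul_le_self _ _) m

end NatArith

/-- Let `R = k[x,y]/(f)` with `deg x = m`, `deg y = n` positive
coprime, `m ≤ n`, and `f` homogeneous of degree `dF ≥ m + n`; set
`a = dF - m - n`.  For all `1 ≤ i, i' ≤ a`, the space of degree-`0` graded
`R`-module homomorphisms `R(i)_{≥0} → R(i')_{≥0}` is isomorphic as a `k`-vector
space to the homogeneous component `R_{i'-i}`. -/
theorem hom_trunc_iso_component
    {k : Type} [Field k] (m n : ℕ) (hm : 0 < m) (hn : 0 < n) (hmn : m ≤ n)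
    (hcop : Nat.Coprime m n)
    (f : MvPolynomial (Fin 2) k) (dF : ℕ) (hf0 : f ≠ 0)
    (hhom : f.IsWeightedHomogeneous ![(m : ℤ), (n : ℤ)] dF)
    (hdF : m + n ≤ dF)
    (i i' : ℤ) (hi1 : 1 ≤ i) (hia : i ≤ (dF : ℤ) - m - n)
    (hi'1 : 1 ≤ i') (hi'a : i' ≤ (dF : ℤ) - m - n) :
    Nonempty ((hyperHom0 m n f i i') ≃ₗ[k] hyperComp m n f (i' - i)) := by
  classical
  obtain ⟨I, rfl⟩ : ∃ I : ℕ, i = (I : ℤ) := ⟨i.toNat, by omega⟩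
  have hI1 : 1 ≤ I := by exact_mod_cast hi1
  set mkq : MvPolynomial (Fin 2) k →+* HypersurfaceRing f :=
    (Ideal.Quotient.mk (Ideal.span {f})) with hmkq
  -- the staircase of minimal monomials
  set P : ℕ := (I - 1) / m + 1 with hPdef
  set Q : ℕ → ℕ := fun p => (I - p * m + n - 1) / n with hQdef
  set D : ℕ → ℕ := fun p => p * m + Q p * n with hDdef
  have hPm : I ≤ P * m := le_succ_div_mul m I hm
  have hPmu : P * m ≤ I - 1 + m := succ_div_mul_le m I
  have hQP : Q P = 0 := by
    have h0 : I - P * m = 0 := Nat.sub_eq_zero_of_le hPm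
    simp only [hQdef, h0]
    exact Nat.div_eq_of_lt (by omega)
  have hQmono : ∀ p : ℕ, Q (p + 1) ≤ Q p := by
    intro p
    apply Nat.div_le_div_right
    have h1 : I - (p + 1) * m ≤ I - p * m :=
      Nat.sub_le_sub_left (Nat.mul_le_mul_right m (Nat.le_succ p)) I
    generalize (I - (p + 1) * m) = A at h1 ⊢
    generalize (I - p * m) = B at h1 ⊢
    omega
  have hDge : ∀ p : ℕ, I ≤ D p := by
    intro p
    simp only [hDdef]
    rcases Nat.le_total I (p * m) with h | h
    · exact le_trans h (Nat.le_add_right _ _)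
    · have h2 : I - p * m ≤ Q p * n := ceil_le_mul n (I - p * m) hn
      generalize hA : p * m = A at h h2 ⊢
      generalize hB : Q p * n = B at h2 ⊢
      omega
  have hDle : ∀ p : ℕ, p ≤ P → D p ≤ I + n - 1 := by
    intro p hp
    rcases eq_or_lt_of_le hp with rfl | hlt
    · simp only [hDdef, hQP, Nat.zero_mul, Nat.add_zero]
      have := hPmu
      generalize (P * m) = A at this ⊢
      omega
    · have h1 : p * m ≤ I - 1 := by
        apply (Nat.le_div_iff_mul_le hm).mp
        omega
      have h2 : Q p * n ≤ I - p * m + n - 1 := mul_le_ceil n (I - p * m)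
      simp only [hDdef]
      generalize hA : p * m = A at h1 h2 ⊢
      generalize hB : Q p * n = B at h2 ⊢
      omega
  -- the staircase monomials and their classes in the truncation
  set u : ℕ → MvPolynomial (Fin 2) k := fun p => X 0 ^ p * X 1 ^ Q p with hudef
  have humem : ∀ p : ℕ, mkq (u p) ∈ hyperComp m n f ((D p : ℕ) : ℤ) := by
    intro p
    simpa only [hDdef] using monomial_mem_hyperComp m n f p (Q p)
  have hutrunc : ∀ p : ℕ, mkq (u p) ∈ hyperTrunc m n f (I : ℤ) := by
    intro p
    exact Submodule.subset_span ⟨((D p : ℕ) : ℤ), by exact_mod_cast hDge p, humem p⟩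
  set ub : ∀ _ : ℕ, hyperTrunc m n f (I : ℤ) := fun p => ⟨mkq (u p), hutrunc p⟩ with hubdef
  -- degree bound needed for the chain
  have hdeg_lt : ∀ p : ℕ, p ≤ P → ((m : ℤ) + ((D p : ℤ) + (i' - I))) < (dF : ℤ) := by
    intro p hp
    have := hDle p hp
    omega
  have hδlt : (i' - (I : ℤ)) < (dF : ℤ) := by omega
  -- the key cancellation principle
  have hkey : ∀ g : MvPolynomial (Fin 2) k, (f ∣ g * X 0 ^ P) → (f ∣ g * X 1 ^ Q 0) → f ∣ g :=
    fun g => dvd_of_dvd_mul_pows f g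
  constructor
  refine (LinearEquiv.ofBijective (mulHom m n f (I : ℤ) i') ⟨?_, ?_⟩).symm
  · -- injectivity of multiplication
    rw [injective_iff_map_eq_zero]
    intro r hr0
    obtain ⟨g, hghom, hgmk⟩ := (mem_hyperComp_iff m n f).mp r.2
    have happ : ∀ p : ℕ, (r : HypersurfaceRing f) * mkq (u p) = 0 := by
      intro p
      have := congrArg (fun ψ : hyperHom0 m n f (I : ℤ) i' =>
        (((ψ : hyperTrunc m n f (I : ℤ) →ₗ[HypersurfaceRing f] hyperTrunc m n f i') (ub p) :
          hyperTrunc m n f i') : HypersurfaceRing f)) hr0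
      simpa only [mulHom_apply_coe, ZeroMemClass.coe_zero, LinearMap.zero_apply,
        hubdef] using this
    have hdvd : ∀ p : ℕ, f ∣ g * u p := by
      intro p
      rw [← Ideal.mem_span_singleton, ← Ideal.Quotient.eq_zero_iff_mem]
      show mkq (g * u p) = 0
      rw [map_mul, hgmk]
      exact happ p
    have hf_dvd_g : f ∣ g := by
      apply hkey
      · have := hdvd P
        simp only [hudef, hQP, pow_zero, mul_one] at this
        exact this
      · have := hdvd 0
        simp only [hudef, pow_zero, one_mul] at this
        exact this
    have : g = 0 := eq_zero_of_dvd_of_lt hhom hghom hδlt hf_dvd_g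
    apply Subtype.ext
    rw [← hgmk, this, map_zero]
    rfl
  · -- surjectivity of multiplication
    rintro ⟨φ, hφ⟩
    have hrep : ∀ p : ℕ, ∃ g : MvPolynomial (Fin 2) k,
        g.IsWeightedHomogeneous ![(m : ℤ), (n : ℤ)] ((D p : ℤ) + (i' - I)) ∧
        mkq g = ((φ (ub p) : hyperTrunc m n f i') : HypersurfaceRing f) := by
      intro p
      have := hφ ((D p : ℕ) : ℤ) (ub p) (humem p)
      exact (mem_hyperComp_iff m n f).mp this
    choose g hghom hgmk using hrep
    -- single chain step
    have hstep : ∀ p : ℕ, p < P →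
        X 0 * g p = X 1 ^ (Q p - Q (p + 1)) * g (p + 1) := by
      intro p hp
      have hcq : (Q p - Q (p + 1)) + Q (p + 1) = Q p := Nat.sub_add_cancel (hQmono p)
      have huid : X 0 * u p = X 1 ^ (Q p - Q (p + 1)) * u (p + 1) := by
        have hsplit : (X 1 : MvPolynomial (Fin 2) k) ^ Q p
            = X 1 ^ (Q p - Q (p + 1)) * X 1 ^ Q (p + 1) := by
          rw [← pow_add, hcq]
        simp only [hudef]
        rw [hsplit]
        ring
      have hR : mkq (X 0 * g p) = mkq (X 1 ^ (Q p - Q (p + 1)) * g (p + 1)) := by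
        have e1 : (mkq (X 0)) • (ub p) = (mkq (X 1 ^ (Q p - Q (p + 1)))) • (ub (p + 1)) :=
          Subtype.ext (by
            show mkq (X 0) * mkq (u p) = mkq (X 1 ^ (Q p - Q (p + 1))) * mkq (u (p + 1))
            rw [← map_mul, ← map_mul, huid])
        calc mkq (X 0 * g p) = mkq (X 0) * ((φ (ub p) : hyperTrunc m n f i') :
              HypersurfaceRing f) := by rw [map_mul, hgmk p]
          _ = ((mkq (X 0) • φ (ub p) : hyperTrunc m n f i') : HypersurfaceRing f) := rfl
          _ = ((φ (mkq (X 0) • ub p) : hyperTrunc m n f i') : HypersurfaceRing f) := by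
              rw [map_smul]
          _ = ((φ (mkq (X 1 ^ (Q p - Q (p + 1))) • ub (p + 1)) : hyperTrunc m n f i') :
              HypersurfaceRing f) := by rw [e1]
          _ = ((mkq (X 1 ^ (Q p - Q (p + 1))) • φ (ub (p + 1)) : hyperTrunc m n f i') :
              HypersurfaceRing f) := by rw [map_smul]
          _ = mkq (X 1 ^ (Q p - Q (p + 1))) * ((φ (ub (p + 1)) : hyperTrunc m n f i') :
              HypersurfaceRing f) := rfl
          _ = mkq (X 1 ^ (Q p - Q (p + 1)) * g (p + 1)) := by rw [map_mul, hgmk (p + 1)]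
      have hdvd : f ∣ (X 0 * g p - X 1 ^ (Q p - Q (p + 1)) * g (p + 1)) := by
        rw [← Ideal.mem_span_singleton, ← Ideal.Quotient.eq_zero_iff_mem]
        show mkq _ = 0
        rw [map_sub, hR, sub_self]
      have hh1 : (X 0 * g p : MvPolynomial (Fin 2) k).IsWeightedHomogeneous
          ![(m : ℤ), (n : ℤ)] ((m : ℤ) + ((D p : ℤ) + (i' - I))) := by
        have hX0 : (X 0 : MvPolynomial (Fin 2) k).IsWeightedHomogeneous
            ![(m : ℤ), (n : ℤ)] (m : ℤ) := by
          have := homog_X0_pow (k := k) (m := m) (n := n) 1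
          rwa [pow_one, one_mul] at this
        exact hX0.mul (hghom p)
      have hh2 : (X 1 ^ (Q p - Q (p + 1)) * g (p + 1) : MvPolynomial (Fin 2) k).IsWeightedHomogeneous
          ![(m : ℤ), (n : ℤ)] ((m : ℤ) + ((D p : ℤ) + (i' - I))) := by
        have := (homog_X1_pow (k := k) (m := m) (n := n) (Q p - Q (p + 1))).mul (hghom (p + 1))
        have hdeq : (((Q p - Q (p + 1)) * n : ℕ) : ℤ) + ((D (p + 1) : ℤ) + (i' - I))
            = (m : ℤ) + ((D p : ℤ) + (i' - I)) := by
          have h1 : (Q p - Q (p + 1)) * n + D (p + 1) = m + D p := by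
            simp only [hDdef]
            rw [Nat.sub_mul]
            have h2 : Q (p + 1) * n ≤ Q p * n := Nat.mul_le_mul_right n (hQmono p)
            have h3 : (p + 1) * m = p * m + m := by ring
            generalize Q p * n = A at h2 ⊢
            generalize Q (p + 1) * n = B at h2 ⊢
            generalize p * m = C at h3 ⊢
            omega
          calc (((Q p - Q (p + 1)) * n : ℕ) : ℤ) + ((D (p + 1) : ℤ) + (i' - I))
              = (((Q p - Q (p + 1)) * n + D (p + 1) : ℕ) : ℤ) + (i' - I) := by
                push_cast; ring
            _ = ((m + D p : ℕ) : ℤ) + (i' - I) := by rw [h1]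
            _ = (m : ℤ) + ((D p : ℤ) + (i' - I)) := by push_cast; ring
        rwa [hdeq] at this
      have hzero : X 0 * g p - X 1 ^ (Q p - Q (p + 1)) * g (p + 1) = 0 := by
        apply eq_zero_of_dvd_of_lt hhom _ (hdeg_lt p (le_of_lt hp)) hdvd
        exact (Submodule.sub_mem (weightedHomogeneousSubmodule k ![(m : ℤ), (n : ℤ)]
          ((m : ℤ) + ((D p : ℤ) + (i' - I)))) hh1 hh2 : _)
      linear_combination hzero
    -- telescoping the chain
    have htel : ∀ j : ℕ, j ≤ P → X 0 ^ j * g (P - j) = X 1 ^ (Q (P - j)) * g P := by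
      intro j
      induction j with
      | zero => intro _; simp [hQP]
      | succ j ih =>
        intro hj
        have hpj : P - (j + 1) + 1 = P - j := by omega
        have hstep' := hstep (P - (j + 1)) (by omega)
        rw [hpj] at hstep'
        have hmono : Q (P - j) ≤ Q (P - (j + 1)) := by
          have := hQmono (P - (j + 1))
          rwa [hpj] at this
        calc X 0 ^ (j + 1) * g (P - (j + 1)) = X 0 ^ j * (X 0 * g (P - (j + 1))) := by ring
          _ = X 0 ^ j * (X 1 ^ (Q (P - (j + 1)) - Q (P - j)) * g (P - j)) := by rw [hstep']
          _ = X 1 ^ (Q (P - (j + 1)) - Q (P - j)) * (X 0 ^ j * g (P - j)) := by ring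
          _ = X 1 ^ (Q (P - (j + 1)) - Q (P - j)) * (X 1 ^ (Q (P - j)) * g P) := by
              rw [ih (by omega)]
          _ = X 1 ^ (Q (P - (j + 1))) * g P := by
              rw [← mul_assoc, ← pow_add, Nat.sub_add_cancel hmono]
    have hmain : X 0 ^ P * g 0 = X 1 ^ (Q 0) * g P := by
      have := htel P le_rfl
      rwa [Nat.sub_self] at this
    -- divide out
    have hX0P_dvd : (X 0 : MvPolynomial (Fin 2) k) ^ P ∣ g P :=
      X0_pow_dvd_cancel ⟨g 0, hmain.symm⟩
    obtain ⟨r, hr⟩ := hX0P_dvd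
    have hDP : D P = P * m := by simp [hDdef, hQP]
    have hrhom : r.IsWeightedHomogeneous ![(m : ℤ), (n : ℤ)] (i' - I) := by
      have := homog_of_X0_pow_mul (m := m) (n := n) (P := P)
        (e := (D P : ℤ) + (i' - I)) (by rw [← hr]; exact hghom P)
      rwa [show ((D P : ℤ) + (i' - I) - P * m : ℤ) = i' - I by
        rw [hDP]; push_cast; ring] at this
    have hg0 : g 0 = X 1 ^ (Q 0) * r := by
      have hx : (X 0 : MvPolynomial (Fin 2) k) ^ P ≠ 0 :=
        pow_ne_zero _ (MvPolynomial.X_ne_zero _)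
      apply mul_left_cancel₀ hx
      rw [hmain, hr]
      ring
    -- the two special values of `g` as multiples of `r`
    have hgPu : g P = u P * r := by
      rw [hr, hudef]
      simp [hQP]
    have hg0u : g 0 = u 0 * r := by
      rw [hg0, hudef]
      simp
    refine ⟨⟨mkq r, (mem_hyperComp_iff m n f).mpr ⟨r, hrhom, rfl⟩⟩, ?_⟩
    apply Subtype.ext
    apply LinearMap.ext
    intro v
    apply Subtype.ext
    show mkq r * (v : HypersurfaceRing f) =
      ((φ v : hyperTrunc m n f i') : HypersurfaceRing f)
    obtain ⟨Cc, hCc⟩ := Ideal.Quotient.mk_surjective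
      (((φ v : hyperTrunc m n f i') : HypersurfaceRing f) - mkq r * (v : HypersurfaceRing f))
    have hkill : ∀ p : ℕ, g p = u p * r →
        mkq (u p) * (((φ v : hyperTrunc m n f i') : HypersurfaceRing f)
          - mkq r * (v : HypersurfaceRing f)) = 0 := by
      intro p hgu
      have e1 : mkq (u p) • v = ((v : HypersurfaceRing f)) • (ub p) :=
        Subtype.ext (by
          show mkq (u p) * (v : HypersurfaceRing f) = (v : HypersurfaceRing f) * mkq (u p)
          ring)
      have e2 : mkq (u p) * ((φ v : hyperTrunc m n f i') : HypersurfaceRing f)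
          = (v : HypersurfaceRing f) * mkq (g p) := by
        calc mkq (u p) * ((φ v : hyperTrunc m n f i') : HypersurfaceRing f)
            = ((mkq (u p) • φ v : hyperTrunc m n f i') : HypersurfaceRing f) := rfl
          _ = ((φ (mkq (u p) • v) : hyperTrunc m n f i') : HypersurfaceRing f) := by
              rw [map_smul]
          _ = ((φ ((v : HypersurfaceRing f) • ub p) : hyperTrunc m n f i') :
              HypersurfaceRing f) := by rw [e1]
          _ = (((v : HypersurfaceRing f) • φ (ub p) : hyperTrunc m n f i') :
              HypersurfaceRing f) := by rw [map_smul]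
          _ = (v : HypersurfaceRing f) * mkq (g p) := by
              rw [SetLike.val_smul, smul_eq_mul, ← hgmk p]
      rw [mul_sub, e2, hgu, map_mul]
      ring
    have hfdvd : f ∣ Cc := by
      have hP' := hkill P hgPu
      have h0' := hkill 0 hg0u
      simp only [hudef, hQP, pow_zero, mul_one, one_mul] at hP' h0'
      apply hkey
      · rw [← Ideal.mem_span_singleton, ← Ideal.Quotient.eq_zero_iff_mem]
        show mkq (Cc * X 0 ^ P) = 0
        rw [map_mul, hCc, mul_comm]
        exact hP'
      · rw [← Ideal.mem_span_singleton, ← Ideal.Quotient.eq_zero_iff_mem]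
        show mkq (Cc * X 1 ^ Q 0) = 0
        rw [map_mul, hCc, mul_comm]
        exact h0'
    have hCc0 : mkq Cc = 0 :=
      Ideal.Quotient.eq_zero_iff_mem.mpr (Ideal.mem_span_singleton.mpr hfdvd)
    rw [hCc] at hCc0
    exact (sub_eq_zero.mp hCc0).symm
end
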